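/- Let 0 < α < 1 and for n ≥ 0 let f_{n+1}(x) = x^{α/(1-α)}( (ln x)^n + ∑_{k=1}^n (n!/(n-k)!)·α^{k(k-1)/2}(1-α)^k/((1-α)⋯(1-α^k))·(ln x)^{n-k} ). Then f_{n+1} extends to a continuous function on [0,1] having exactly n+1 zeroes in [0,1]. -/

import Mathlib

open Finset

noncomputable def cc (q : ℝ) (n k : ℕ) : ℝ :=
  ((n.factorial / (n - k).factorial : ℕ) : ℝ) *
    (q ^ (k * (k - 1) / 2) * (1 - q) ^ k / ∏ i ∈ Finset.Icc 1 k, (1 - q ^ i))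

noncomputable def QQ (q : ℝ) (n : ℕ) (y : ℝ) : ℝ :=
  y ^ n + ∑ k ∈ Finset.Icc 1 n, cc q n k * y ^ (n - k)

lemma fact_cast (n k : ℕ) :
    ((n.factorial / (n - k).factorial : ℕ) : ℝ) = (n.factorial : ℝ) / ((n - k).factorial : ℝ) := by
  rw [Nat.cast_div (Nat.factorial_dvd_factorial (Nat.sub_le n k))]
  exact_mod_cast (Nat.factorial_pos _).ne'

lemma prod_pos {q : ℝ} (hq0 : 0 < q) (hq1 : q < 1) (k : ℕ) :
    0 < ∏ i ∈ Finset.Icc 1 k, (1 - q ^ i) := by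
  apply Finset.prod_pos
  intro i hi
  simp only [Finset.mem_Icc] at hi
  have : q ^ i < 1 := pow_lt_one₀ hq0.le hq1 (by omega)
  linarith

lemma cc_pos {q : ℝ} (hq0 : 0 < q) (hq1 : q < 1) {n k : ℕ} (hk : k ≤ n) :
    0 < cc q n k := by
  unfold cc
  apply mul_pos
  · have h1 : 0 < n.factorial / (n - k).factorial :=
      Nat.div_pos (Nat.factorial_le (Nat.sub_le n k)) (Nat.factorial_pos _)
    exact_mod_cast h1
  · exact div_pos (mul_pos (pow_pos hq0 _) (pow_pos (by linarith) _)) (prod_pos hq0 hq1 k)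

lemma cc_zero (q : ℝ) (n : ℕ) : cc q n 0 = 1 := by
  simp [cc, Nat.div_self (Nat.factorial_pos n)]

-- derivative coefficient identity

lemma cc_deriv {q : ℝ} (n k : ℕ) (hk : k ≤ n) :
    ((n + 1 - k : ℕ) : ℝ) * cc q (n+1) k = ((n : ℝ) + 1) * cc q n k := by
  obtain ⟨j, rfl⟩ := Nat.exists_eq_add_of_le hk
  unfold cc
  rw [fact_cast, fact_cast]
  have e0 : k + j + 1 - k = j + 1 := by omega
  have e0' : k + j - k = j := by omega
  rw [e0, e0']
  have e3 : (((k+j)+1).factorial : ℝ) = ((k:ℝ)+(j:ℝ)+1) * (k+j).factorial := by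
    rw [Nat.factorial_succ]; push_cast; ring
  have e4 : ((j+1).factorial : ℝ) = ((j:ℝ)+1) * j.factorial := by
    rw [Nat.factorial_succ]; push_cast; ring
  have h4 : ((j.factorial : ℕ) : ℝ) ≠ 0 := by exact_mod_cast (Nat.factorial_pos _).ne'
  have h5 : ((j:ℝ) + 1) ≠ 0 := by positivity
  have key : ((j:ℝ)+1) * ((((k+j)+1).factorial:ℝ) / ((j+1).factorial:ℝ))
      = ((k:ℝ)+(j:ℝ)+1) * (((k+j).factorial:ℝ) / (j.factorial:ℝ)) := by
    rw [e3, e4]; field_simp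
  push_cast
  push_cast at key
  linear_combination key * (q ^ (k * (k - 1) / 2) * (1 - q) ^ k / ∏ i ∈ Finset.Icc 1 k, (1 - q ^ i))

-- star coefficient identity

lemma cc_star {q : ℝ} (hq0 : 0 < q) (hq1 : q < 1) (n m : ℕ) (hm : m ≤ n) :
    cc q (n+1) (m+1) * (q^(n-m) - q^(n+1)) = ((n:ℝ)+1) * (1-q) * q^n * cc q n m := by
  obtain ⟨j, rfl⟩ := Nat.exists_eq_add_of_le hm
  unfold cc
  rw [fact_cast, fact_cast]
  have e0 : m + j + 1 - (m + 1) = j := by omega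
  have e0' : m + j - m = j := by omega
  rw [e0, e0']
  have e1 : (m+1) * ((m+1) - 1) / 2 = m*(m-1)/2 + m := by
    have h1 := Nat.choose_two_right (m+1)
    have h2 := Nat.choose_two_right m
    have h3 := Nat.choose_succ_succ m 1
    simp [Nat.choose_one_right] at h3
    omega
  rw [e1, pow_add]
  rw [Finset.prod_Icc_succ_top (by omega : 1 ≤ m + 1)]
  have e2 : q^j - q^(m+j+1) = q^j * (1 - q^(m+1)) := by
    rw [mul_sub, mul_one, ← pow_add]; congr 2; omega
  rw [e2]
  have e3 : ((m+j+1).factorial : ℝ) = ((m:ℝ)+(j:ℝ)+1) * (m+j).factorial := by rw [Nat.factorial_succ]; push_cast; ring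
  rw [e3]
  have h4 : ((j.factorial : ℕ) : ℝ) ≠ 0 := by exact_mod_cast (Nat.factorial_pos _).ne'
  have h5 : (∏ i ∈ Finset.Icc 1 m, (1 - q^i)) ≠ 0 := (prod_pos hq0 hq1 m).ne'
  have h6 : (1:ℝ) - q^(m+1) ≠ 0 := by
    have : q ^ (m+1) < 1 := pow_lt_one₀ hq0.le hq1 (by omega)
    linarith
  push_cast
  field_simp
  ring

lemma QQ_eq (q : ℝ) (n : ℕ) (y : ℝ) :
    QQ q n y = ∑ j ∈ Finset.range (n+1), cc q n j * y ^ (n-j) := by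
  rw [Finset.sum_range_succ' (fun j => cc q n j * y ^ (n-j)) n]
  rw [QQ, cc_zero]
  rw [← Finset.Ico_add_one_right_eq_Icc, Finset.sum_Ico_eq_sum_range]
  simp only [Nat.add_sub_cancel, one_mul, Nat.sub_zero]
  rw [add_comm]
  congr 1
  apply Finset.sum_congr rfl
  intro i _
  rw [Nat.add_comm 1 i]

lemma QQ_hasDerivAt (q : ℝ) (n : ℕ) (y : ℝ) :
    HasDerivAt (QQ q (n+1)) (((n:ℝ)+1) * QQ q n y) y := by
  have h1 : HasDerivAt (fun z : ℝ => z^(n+1) + ∑ k ∈ Finset.Icc 1 (n+1), cc q (n+1) k * z^(n+1-k))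
      ((((n+1:ℕ)):ℝ) * y^(n+1-1) + ∑ k ∈ Finset.Icc 1 (n+1),
        cc q (n+1) k * (((n+1-k:ℕ):ℝ) * y^(n+1-k-1))) y :=
    (hasDerivAt_pow (n+1) y).add
      (HasDerivAt.fun_sum (fun k _ => ((hasDerivAt_pow (n+1-k) y).const_mul _)))
  have h2 : QQ q (n+1) = fun z : ℝ => z^(n+1) + ∑ k ∈ Finset.Icc 1 (n+1), cc q (n+1) k * z^(n+1-k) := by
    funext z; rw [QQ]
  rw [h2]
  convert h1 using 1
  rw [QQ, mul_add, Finset.mul_sum]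
  congr 1
  · push_cast; ring
  · rw [Finset.sum_Icc_succ_top (by omega : 1 ≤ n+1)]
    have hlast : cc q (n+1) (n+1) * (((n+1-(n+1):ℕ):ℝ) * y^(n+1-(n+1)-1)) = 0 := by
      simp
    rw [hlast, add_zero]
    apply Finset.sum_congr rfl
    intro k hk
    simp only [Finset.mem_Icc] at hk
    have e : n + 1 - k - 1 = n - k := by omega
    rw [e, ← mul_assoc, ← mul_assoc, mul_comm (cc q (n+1) k) _, cc_deriv n k hk.2]

lemma QQ_star {q : ℝ} (hq0 : 0 < q) (hq1 : q < 1) (n : ℕ) (y : ℝ) :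
    QQ q (n+1) (q*y) = q^(n+1) * QQ q (n+1) y + ((n:ℝ)+1) * (1-q) * q^n * QQ q n y := by
  rw [QQ_eq q (n+1) (q*y), QQ_eq q (n+1) y, QQ_eq q n y, Finset.mul_sum, Finset.mul_sum]
  rw [Finset.sum_range_succ' (fun k => cc q (n+1) k * (q*y) ^ (n+1-k)) (n+1)]
  rw [Finset.sum_range_succ' (fun k => q^(n+1) * (cc q (n+1) k * y ^ (n+1-k))) (n+1)]
  simp only [cc_zero, Nat.sub_zero, one_mul]
  have key : ∀ i ∈ Finset.range (n+1),
      cc q (n+1) (i+1) * (q*y) ^ (n+1-(i+1))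
      = q^(n+1) * (cc q (n+1) (i+1) * y ^ (n+1-(i+1)))
        + ((n:ℝ)+1) * (1-q) * q^n * (cc q n i * y ^ (n-i)) := by
    intro i hi
    simp only [Finset.mem_range] at hi
    have hi' : i ≤ n := by omega
    have e : n + 1 - (i + 1) = n - i := by omega
    rw [e, mul_pow]
    have hst := cc_star hq0 hq1 n i hi'
    calc cc q (n+1) (i+1) * (q ^ (n-i) * y ^ (n-i))
        = (cc q (n+1) (i+1) * (q^(n-i) - q^(n+1))) * y^(n-i)
          + q^(n+1) * (cc q (n+1) (i+1) * y^(n-i)) := by ring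
      _ = _ := by rw [hst]; ring
  rw [Finset.sum_congr rfl key, Finset.sum_add_distrib]
  ring

lemma QQ_cont (q : ℝ) (n : ℕ) : Continuous (QQ q n) := by
  have : QQ q n = fun y => y ^ n + ∑ k ∈ Finset.Icc 1 n, cc q n k * y ^ (n - k) := rfl
  rw [this]
  exact (continuous_pow n).add
    (continuous_finset_sum _ fun k _ => continuous_const.mul (continuous_pow _))

lemma incr {q : ℝ} (n : ℕ) (ε a b : ℝ) (hab : a < b)
    (hsgn : ∀ z, a < z → z < b → 0 < ε * QQ q n z) :
    ε * QQ q (n+1) a < ε * QQ q (n+1) b := by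
  have hmono : StrictMonoOn (fun y => ε * QQ q (n+1) y) (Set.Icc a b) := by
    apply strictMonoOn_of_deriv_pos (convex_Icc a b)
    · exact (continuous_const.mul (QQ_cont q (n+1))).continuousOn
    · intro x hx
      rw [interior_Icc, Set.mem_Ioo] at hx
      have hd : HasDerivAt (fun y => ε * QQ q (n+1) y) (ε * (((n:ℝ)+1) * QQ q n x)) x :=
        (QQ_hasDerivAt q n x).const_mul ε
      rw [hd.deriv]
      have := hsgn x hx.1 hx.2
      nlinarith
  exact hmono (Set.left_mem_Icc.2 hab.le) (Set.right_mem_Icc.2 hab.le) hab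

lemma root_exists {q : ℝ} (n : ℕ) (ε u v : ℝ) (huv : u < v)
    (hu : 0 < ε * QQ q n u) (hv : ε * QQ q n v < 0) :
    ∃ w, u < w ∧ w < v ∧ QQ q n w = 0 := by
  have hc : ContinuousOn (fun y => ε * QQ q n y) (Set.Icc u v) :=
    (continuous_const.mul (QQ_cont q n)).continuousOn
  have h0 : (0:ℝ) ∈ Set.Ioo (ε * QQ q n v) (ε * QQ q n u) := ⟨hv, hu⟩
  have := intermediate_value_Ioo' huv.le hc h0
  obtain ⟨w, hw, hw0⟩ := this
  refine ⟨w, hw.1, hw.2, ?_⟩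
  have hε : ε ≠ 0 := by rintro rfl; simp at hu
  exact (mul_eq_zero.1 hw0).resolve_left hε

lemma QQ_zero_pos {q : ℝ} (hq0 : 0 < q) (hq1 : q < 1) (n : ℕ) : 0 < QQ q n 0 := by
  rcases n with _ | m
  · norm_num [QQ]
  · have : QQ q (m+1) 0 = cc q (m+1) (m+1) := by
      rw [QQ]
      rw [Finset.sum_eq_single (m+1)]
      · simp
      · intro k hk hne
        simp only [Finset.mem_Icc] at hk
        have : m + 1 - k ≠ 0 := by omega
        simp [zero_pow this]
      · simp
    rw [this]
    exact cc_pos hq0 hq1 le_rfl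

lemma QQ_tail {q : ℝ} (hq0 : 0 < q) (hq1 : q < 1) (n : ℕ) (y : ℝ)
    (hy : y ≤ -(1 + ∑ k ∈ Finset.Icc 1 n, cc q n k)) :
    0 < (-1:ℝ)^n * QQ q n y := by
  rcases n with _ | m
  · norm_num [QQ]
  set n := m + 1 with hn
  set Ms := ∑ k ∈ Finset.Icc 1 n, cc q n k with hMs
  have hMs0 : 0 ≤ Ms := Finset.sum_nonneg fun k hk => by
    simp only [Finset.mem_Icc] at hk; exact (cc_pos hq0 hq1 hk.2).le
  set t : ℝ := -y with hty
  have ht1 : 1 + Ms ≤ t := by simp [hty]; linarith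
  have ht1' : (1:ℝ) ≤ t := by linarith
  have hyt : y = -t := by simp [hty]
  have hlead : (-1:ℝ)^n * y^n = t^n := by
    rw [hyt]; rw [← mul_pow]; norm_num
  have hterm : ∀ k ∈ Finset.Icc 1 n, -(cc q n k * t^(n-1)) ≤ (-1:ℝ)^n * (cc q n k * y^(n-k)) := by
    intro k hk
    simp only [Finset.mem_Icc] at hk
    have hpos := cc_pos hq0 hq1 hk.2
    have habs : |(-1:ℝ)^n * (cc q n k * y^(n-k))| = cc q n k * t^(n-k) := by
      rw [abs_mul, abs_mul, abs_pow, abs_neg, abs_one, one_pow, one_mul,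
        abs_of_pos hpos, abs_pow, hyt, abs_neg, abs_of_pos (by linarith : (0:ℝ) < t)]
    have hb : cc q n k * t^(n-k) ≤ cc q n k * t^(n-1) := by
      apply mul_le_mul_of_nonneg_left _ hpos.le
      exact pow_le_pow_right₀ ht1' (by omega)
    nlinarith [neg_abs_le ((-1:ℝ)^n * (cc q n k * y^(n-k)))]
  have hsum : -(Ms * t^(n-1)) ≤ (-1:ℝ)^n * ∑ k ∈ Finset.Icc 1 n, cc q n k * y^(n-k) := by
    have h := Finset.sum_le_sum hterm
    have e1 : ∑ k ∈ Finset.Icc 1 n, -(cc q n k * t^(n-1)) = -(Ms * t^(n-1)) := by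
      rw [hMs, Finset.sum_mul, ← Finset.sum_neg_distrib]
    have e2 : ∑ k ∈ Finset.Icc 1 n, (-1:ℝ)^n * (cc q n k * y^(n-k))
        = (-1:ℝ)^n * ∑ k ∈ Finset.Icc 1 n, cc q n k * y^(n-k) := by
      rw [Finset.mul_sum]
    rw [e1, e2] at h
    exact h
  have hQ : (-1:ℝ)^n * QQ q n y = (-1:ℝ)^n * y^n + (-1:ℝ)^n * ∑ k ∈ Finset.Icc 1 n, cc q n k * y^(n-k) := by
    rw [QQ]; ring
  have htn : t^n = t * t^(n-1) := by
    rw [hn, Nat.add_sub_cancel, pow_succ]; ring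
  have htp : (0:ℝ) < t^(n-1) := pow_pos (by linarith) _
  rw [hQ, hlead]
  have : Ms * t^(n-1) < t^n := by
    rw [htn]
    nlinarith
  linarith

def GoodRoots (q : ℝ) (n : ℕ) (s : ℕ → ℝ) : Prop :=
  (∀ j, 1 ≤ j → j ≤ n → s j < 0) ∧
  (∀ j, 1 ≤ j → j + 1 ≤ n → q * s j < s (j+1)) ∧
  (∀ y : ℝ, QQ q n y = 0 ↔ ∃ j, 1 ≤ j ∧ j ≤ n ∧ y = s j) ∧
  (∀ j, j ≤ n → ∀ y : ℝ, (j = 0 ∨ s j < y) → (j = n ∨ y < s (j+1)) →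
    0 < (-1:ℝ)^(n-j) * QQ q n y)

lemma step {q : ℝ} (hq0 : 0 < q) (hq1 : q < 1) (n : ℕ) (s : ℕ → ℝ)
    (H : GoodRoots q n s) : ∃ s', GoodRoots q (n+1) s' := by
  classical
  obtain ⟨hneg, hgap, hroot, hsign⟩ := H
  have hq1' : (0:ℝ) < 1 - q^(n+1) := by
    have h := pow_lt_one₀ hq0.le hq1 (show n+1 ≠ 0 by omega); linarith
  have epow : ∀ j : ℕ, j ≤ n → (-1:ℝ)^(n+1-j) = -(-1:ℝ)^(n-j) := by
    intro j hj
    have e : n+1-j = (n-j)+1 := by omega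
    rw [e, pow_succ]; ring
  have hQn_s : ∀ j, 1 ≤ j → j ≤ n → QQ q n (s j) = 0 :=
    fun j h1 h2 => (hroot (s j)).mpr ⟨j, h1, h2, rfl⟩
  have hsq : ∀ j, 1 ≤ j → j ≤ n → s j < q * s j := by
    intro j h1 h2; nlinarith [hneg j h1 h2]
  -- sign of Q_{n+1} at the s j
  have claimA : ∀ j, 1 ≤ j → j ≤ n → 0 < (-1:ℝ)^(n+1-j) * QQ q (n+1) (s j) := by
    intro j h1 h2
    have hsgn : ∀ z, s j < z → z < q * s j → 0 < (-1:ℝ)^(n-j) * QQ q n z := by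
      intro z hz1 hz2
      refine hsign j h2 z (Or.inr hz1) ?_
      rcases eq_or_lt_of_le h2 with h | h
      · exact Or.inl h
      · exact Or.inr (lt_trans hz2 (hgap j h1 (by omega)))
    have hlt := incr n ((-1:ℝ)^(n-j)) (s j) (q * s j) (hsq j h1 h2) hsgn
    have hstar := QQ_star hq0 hq1 n (s j)
    rw [hQn_s j h1 h2] at hstar
    have hst : QQ q (n+1) (q * s j) = q^(n+1) * QQ q (n+1) (s j) := by rw [hstar]; ring
    rw [hst] at hlt
    rw [epow j h2]
    nlinarith [hlt, hq1']
  have claimA' : ∀ j, 1 ≤ j → j ≤ n → 0 < (-1:ℝ)^(n+1-j) * QQ q (n+1) (q * s j) := by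
    intro j h1 h2
    have hstar := QQ_star hq0 hq1 n (s j)
    rw [hQn_s j h1 h2] at hstar
    have hst : QQ q (n+1) (q * s j) = q^(n+1) * QQ q (n+1) (s j) := by rw [hstar]; ring
    rw [hst]
    have := claimA j h1 h2
    have hp := pow_pos hq0 (n+1)
    nlinarith
  -- tail
  set MM : ℝ := 1 + ∑ k ∈ Finset.Icc 1 (n+1), cc q (n+1) k with hMM
  have hMMpos : 0 < MM := by
    have : 0 ≤ ∑ k ∈ Finset.Icc 1 (n+1), cc q (n+1) k :=
      Finset.sum_nonneg fun k hk => by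
        simp only [Finset.mem_Icc] at hk; exact (cc_pos hq0 hq1 hk.2).le
    rw [hMM]; linarith
  set yL : ℝ := min (-MM) (s 1 - 1) with hyL
  have hyLM : yL ≤ -MM := min_le_left _ _
  have htail : ∀ y, y ≤ yL → 0 < (-1:ℝ)^(n+1) * QQ q (n+1) y := by
    intro y hy
    exact QQ_tail hq0 hq1 (n+1) y (by rw [← hMM] at *; linarith)
  -- sigma and Lp
  set σ : ℕ → ℝ := fun j => if j ≤ n then s j else 0 with hσ
  set Lp : ℕ → ℝ := fun j => if j = 0 then yL else q * σ j with hLp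
  have hσ_le : ∀ i, 1 ≤ i → σ i ≤ 0 := by
    intro i h1
    by_cases hi : i ≤ n
    · have e : σ i = s i := by simp only [hσ]; rw [if_pos hi]
      rw [e]; exact (hneg i h1 hi).le
    · have e : σ i = 0 := by simp only [hσ]; rw [if_neg hi]
      rw [e]
  have hright : ∀ j, j ≤ n → 0 < (-1:ℝ)^(n-j) * QQ q (n+1) (σ (j+1)) := by
    intro j hj
    by_cases h : j = n
    · have e : σ (j+1) = 0 := by simp only [hσ]; rw [if_neg (by omega)]
      have e2 : n - j = 0 := by omega
      rw [e, e2, pow_zero]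
      simpa using QQ_zero_pos hq0 hq1 (n+1)
    · have hj1 : j + 1 ≤ n := by omega
      have hσe : σ (j+1) = s (j+1) := by simp only [hσ]; rw [if_pos hj1]
      rw [hσe]
      have h2 := claimA (j+1) (by omega) hj1
      have e : n+1-(j+1) = n - j := by omega
      rwa [e] at h2
  have hleft : ∀ j, j ≤ n → 0 < (-1:ℝ)^(n+1-j) * QQ q (n+1) (Lp j) := by
    intro j hj
    by_cases h : j = 0
    · subst h
      have e : Lp 0 = yL := by simp [hLp]
      rw [e, Nat.sub_zero]
      exact htail yL le_rfl
    · have h1 : 1 ≤ j := by omega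
      have hLe : Lp j = q * s j := by
        simp only [hLp, hσ]; rw [if_neg h, if_pos hj]
      rw [hLe]; exact claimA' j h1 hj
  have hLσ : ∀ j, j ≤ n → Lp j < σ (j+1) := by
    intro j hj
    by_cases h : j = 0
    · subst h
      have hL0 : Lp 0 = yL := by simp [hLp]
      rw [hL0]
      by_cases hn0 : 1 ≤ n
      · have e : σ 1 = s 1 := by simp only [hσ]; rw [if_pos hn0]
        rw [e]
        have h2 := min_le_right (-MM) (s 1 - 1)
        rw [← hyL] at h2
        linarith
      · have e : σ 1 = 0 := by simp only [hσ]; rw [if_neg (by omega)]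
        rw [e]
        linarith
    · have h1 : 1 ≤ j := by omega
      have hLe : Lp j = q * s j := by
        simp only [hLp, hσ]; rw [if_neg h, if_pos hj]
      rw [hLe]
      by_cases h2 : j + 1 ≤ n
      · have e : σ (j+1) = s (j+1) := by simp only [hσ]; rw [if_pos h2]
        rw [e]; exact hgap j h1 h2
      · have e : σ (j+1) = 0 := by simp only [hσ]; rw [if_neg h2]
        rw [e]
        exact mul_neg_of_pos_of_neg hq0 (hneg j h1 (by omega))
  -- roots of Q_{n+1}
  have hex : ∀ j : ℕ, ∃ w : ℝ, j ≤ n → (Lp j < w ∧ w < σ (j+1) ∧ QQ q (n+1) w = 0) := by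
    intro j
    by_cases hj : j ≤ n
    · have hu := hleft j hj
      have hv : (-1:ℝ)^(n+1-j) * QQ q (n+1) (σ (j+1)) < 0 := by
        have := hright j hj
        rw [epow j hj]
        nlinarith
      obtain ⟨w, hw1, hw2, hw3⟩ := root_exists (n+1) ((-1:ℝ)^(n+1-j)) _ _ (hLσ j hj) hu hv
      exact ⟨w, fun _ => ⟨hw1, hw2, hw3⟩⟩
    · exact ⟨0, fun h => absurd h hj⟩
  choose t ht using hex
  have ht_root : ∀ j, j ≤ n → QQ q (n+1) (t j) = 0 := fun j hj => (ht j hj).2.2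
  have ht_ltσ : ∀ j, j ≤ n → t j < σ (j+1) := fun j hj => (ht j hj).2.1
  have ht_gtL : ∀ j, j ≤ n → Lp j < t j := fun j hj => (ht j hj).1
  have ht_neg : ∀ j, j ≤ n → t j < 0 := by
    intro j hj
    exact lt_of_lt_of_le (ht_ltσ j hj) (hσ_le (j+1) (by omega))
  -- over s j bounds: s j < Lp j for j ≥ 1
  have hLpe : ∀ j, 1 ≤ j → j ≤ n → Lp j = q * s j := by
    intro j h1 hj
    simp only [hLp, hσ]; rw [if_neg (by omega), if_pos hj]
  have hsLp : ∀ j, 1 ≤ j → j ≤ n → s j < Lp j := by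
    intro j h1 hj
    rw [hLpe j h1 hj]; exact hsq j h1 hj
  have ht_gap : ∀ j, 1 ≤ j → j ≤ n → q * t (j-1) < t j := by
    intro j h1 hj
    have hj1 : j - 1 ≤ n := by omega
    have e : (j-1) + 1 = j := by omega
    have h2 : t (j-1) < σ j := by have := ht_ltσ (j-1) hj1; rwa [e] at this
    have h3 : q * t (j-1) < q * σ j := by exact (mul_lt_mul_iff_right₀ hq0).mpr h2
    have h4 : q * σ j = Lp j := by
      simp only [hLp]; rw [if_neg (by omega)]
    rw [h4] at h3
    exact lt_trans h3 (ht_gtL j hj)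
  have ht_succ_lt : ∀ j, j + 1 ≤ n → t j < t (j+1) := by
    intro j hj
    have h1 := ht_gap (j+1) (by omega) hj
    have e : (j+1) - 1 = j := by omega
    rw [e] at h1
    have h2 : t j < q * t j := by nlinarith [ht_neg j (by omega)]
    linarith
  have ht_mono : ∀ i j, j ≤ n → i < j → t i < t j := by
    intro i j
    induction j with
    | zero => omega
    | succ k ih =>
      intro hk hik
      rcases Nat.lt_succ_iff_lt_or_eq.mp hik with h | h
      · exact lt_trans (ih (by omega) h) (ht_succ_lt k hk)
      · subst h; exact ht_succ_lt i hk
  -- no two roots in a sign region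
  have key_no2 : ∀ (j : ℕ), j ≤ n → ∀ y1 y2 : ℝ, y1 < y2 →
      (j = 0 ∨ s j < y1) → (j = n ∨ y2 < s (j+1)) →
      QQ q (n+1) y1 = 0 → QQ q (n+1) y2 = 0 → False := by
    intro j hj y1 y2 h12 hy1 hy2 hr1 hr2
    have hsg : ∀ z, y1 < z → z < y2 → 0 < (-1:ℝ)^(n-j) * QQ q n z := by
      intro z hz1 hz2
      refine hsign j hj z ?_ ?_
      · rcases hy1 with h0 | h0
        · exact Or.inl h0
        · exact Or.inr (lt_trans h0 hz1)
      · rcases hy2 with h0 | h0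
        · exact Or.inl h0
        · exact Or.inr (lt_trans hz2 h0)
    have h := incr n ((-1:ℝ)^(n-j)) y1 y2 h12 hsg
    rw [hr1, hr2] at h; simp at h
  -- bounds relating s and t
  have hs_lt_t : ∀ j, 1 ≤ j → j ≤ n → s j < t j := by
    intro j h1 hj
    exact lt_trans (hsLp j h1 hj) (ht_gtL j hj)
  have ht_lt_s : ∀ j, j + 1 ≤ n → t j < s (j+1) := by
    intro j hj
    have := ht_ltσ j (by omega)
    have e : σ (j+1) = s (j+1) := by simp only [hσ]; rw [if_pos hj]
    rwa [e] at this
  refine ⟨fun j => t (j-1), ?_, ?_, ?_, ?_⟩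
  · -- negativity
    intro j h1 h2
    exact ht_neg (j-1) (by omega)
  · -- gap
    intro j h1 h2
    simpa using ht_gap j h1 (by omega)
  · -- root characterization
    intro y
    constructor
    · intro hy
      by_contra hcon
      push_neg at hcon
      have hne : ∀ i, i ≤ n → y ≠ t i := by
        intro i hi
        have := hcon (i+1) (by omega) (by omega)
        have e : (i+1) - 1 = i := by omega
        rwa [e] at this
      rcases lt_trichotomy y (t 0) with h | h | h
      · -- y < t 0
        refine key_no2 0 (Nat.zero_le n) y (t 0) h (Or.inl rfl) ?_ hy (ht_root 0 (Nat.zero_le n))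
        by_cases hn0 : n = 0
        · exact Or.inl hn0.symm
        · exact Or.inr (ht_lt_s 0 (by omega))
      · exact hne 0 (Nat.zero_le n) h
      · -- t 0 < y
        have hngG : ∀ m, m ≤ n → Nat.findGreatest (fun i => t i < y) n < m → ¬ t m < y :=
          fun m hm hlt => Nat.findGreatest_is_greatest hlt hm
        have hspecG : t (Nat.findGreatest (fun i => t i < y) n) < y :=
          Nat.findGreatest_spec (P := fun i => t i < y) (Nat.zero_le n) h
        set j' := Nat.findGreatest (fun i => t i < y) n with hj'
        have hj'spec : t j' < y := hspecG
        have hj'le : j' ≤ n := Nat.findGreatest_le n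
        by_cases hj'n : j' = n
        · -- y right of t n
          have htny : t n < y := by rw [← hj'n]; exact hj'spec
          refine key_no2 n le_rfl (t n) y htny ?_ (Or.inl rfl) (ht_root n le_rfl) hy
          by_cases hn0 : n = 0
          · exact Or.inl hn0
          · refine Or.inr ?_
            have h1 := hsq n (by omega) le_rfl
            have h2 := ht_gtL n le_rfl
            rw [hLpe n (by omega) le_rfl] at h2
            linarith
        · have hj'lt : j' < n := by omega
          have hymax : y < t (j'+1) := by
            have hng := hngG (j'+1) (by omega) (by omega)
            push_neg at hng
            rcases lt_or_eq_of_le hng with h0 | h0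
            · exact h0
            · exact absurd h0 (hne (j'+1) (by omega))
          rcases lt_trichotomy y (s (j'+1)) with hc | hc | hc
          · -- between t j' and s (j'+1)
            refine key_no2 j' (by omega) (t j') y hj'spec ?_ (Or.inr hc)
              (ht_root j' (by omega)) hy
            by_cases hj'0 : j' = 0
            · exact Or.inl hj'0
            · refine Or.inr ?_
              have h1 := hsq j' (by omega) (by omega)
              have h2 := ht_gtL j' (by omega)
              rw [hLpe j' (by omega) (by omega)] at h2
              linarith
          · -- y = s (j'+1) : contradiction with claimA
            have := claimA (j'+1) (by omega) (by omega)
            rw [← hc, hy] at this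
            simp at this
          · -- between s (j'+1) and t (j'+1)
            refine key_no2 (j'+1) (by omega) y (t (j'+1)) hymax (Or.inr hc) ?_
              hy (ht_root (j'+1) (by omega))
            by_cases hj1n : j' + 1 = n
            · exact Or.inl hj1n
            · exact Or.inr (ht_lt_s (j'+1) (by omega))
    · rintro ⟨j, h1, h2, rfl⟩
      exact ht_root (j-1) (by omega)
  · -- signs
    intro j hj y hy1 hy2
    by_cases hj0 : j = 0
    · subst hj0
      have hyt0 : y < t 0 := by
        rcases hy2 with h0 | h0
        · omega
        · simpa using h0
      have hsg : ∀ z, y < z → z < t 0 → 0 < (-1:ℝ)^n * QQ q n z := by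
        intro z hz1 hz2
        have hcond : (0 = n ∨ z < s (0 + 1)) := by
          by_cases hn0 : n = 0
          · exact Or.inl hn0.symm
          · exact Or.inr (lt_trans hz2 (ht_lt_s 0 (by omega)))
        simpa using hsign 0 (Nat.zero_le n) z (Or.inl rfl) hcond
      have h := incr n ((-1:ℝ)^n) y (t 0) hyt0 hsg
      rw [ht_root 0 (Nat.zero_le n)] at h
      have e : n + 1 - 0 = n + 1 := by omega
      rw [e, pow_succ]
      nlinarith
    · by_cases hjn : j = n + 1
      · subst hjn
        have hty : t n < y := by
          rcases hy1 with h0 | h0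
          · omega
          · simpa using h0
        have hsg : ∀ z, t n < z → z < y → 0 < (-1:ℝ)^(n-n) * QQ q n z := by
          intro z hz1 hz2
          refine hsign n le_rfl z ?_ (Or.inl rfl)
          by_cases hn0 : n = 0
          · exact Or.inl hn0
          · refine Or.inr ?_
            have h1 := hsq n (by omega) le_rfl
            have h2 := ht_gtL n le_rfl
            rw [hLpe n (by omega) le_rfl] at h2
            linarith
        have h := incr n ((-1:ℝ)^(n-n)) (t n) y hty hsg
        rw [ht_root n le_rfl] at h
        rw [Nat.sub_self] at h
        have e : n + 1 - (n+1) = 0 := by omega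
        rw [e]
        simpa using h
      · -- middle: 1 ≤ j ≤ n
        have h1j : 1 ≤ j := by omega
        have hjn' : j ≤ n := by omega
        have hty1 : t (j-1) < y := by
          rcases hy1 with h0 | h0
          · omega
          · exact h0
        have hyt2 : y < t j := by
          rcases hy2 with h0 | h0
          · omega
          · simpa using h0
        rcases lt_trichotomy y (s j) with hc | hc | hc
        · -- left part: use increasing from t (j-1)
          have hsg : ∀ z, t (j-1) < z → z < y → 0 < (-1:ℝ)^(n-(j-1)) * QQ q n z := by
            intro z hz1 hz2
            refine hsign (j-1) (by omega) z ?_ ?_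
            · by_cases hj1 : j = 1
              · exact Or.inl (by omega)
              · refine Or.inr ?_
                have ha := hsq (j-1) (by omega) (by omega)
                have hb := ht_gtL (j-1) (by omega)
                rw [hLpe (j-1) (by omega) (by omega)] at hb
                linarith
            · refine Or.inr ?_
              have e : (j-1) + 1 = j := by omega
              rw [e]
              linarith
          have h := incr n ((-1:ℝ)^(n-(j-1))) (t (j-1)) y hty1 hsg
          rw [ht_root (j-1) (by omega)] at h
          have e : n - (j-1) = n + 1 - j := by omega
          rw [e] at h
          simpa using h
        · -- y = s j
          have := claimA j h1j hjn'
          rwa [← hc] at this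
        · -- right part: decreasing into t j
          have hsg : ∀ z, y < z → z < t j → 0 < (-1:ℝ)^(n-j) * QQ q n z := by
            intro z hz1 hz2
            refine hsign j hjn' z (Or.inr (lt_trans hc hz1)) ?_
            by_cases hjn2 : j = n
            · exact Or.inl hjn2
            · exact Or.inr (lt_trans hz2 (ht_lt_s j (by omega)))
          have h := incr n ((-1:ℝ)^(n-j)) y (t j) hyt2 hsg
          rw [ht_root j hjn'] at h
          rw [epow j hjn']
          nlinarith

lemma goodRoots_exists {q : ℝ} (hq0 : 0 < q) (hq1 : q < 1) (n : ℕ) :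
    ∃ s, GoodRoots q n s := by
  induction n with
  | zero =>
    refine ⟨fun _ => 0, ?_, ?_, ?_, ?_⟩
    · intro j h1 h2; omega
    · intro j h1 h2; omega
    · intro y
      constructor
      · intro h; exfalso; rw [QQ] at h; simp at h
      · rintro ⟨j, h1, h2, _⟩; omega
    · intro j hj y _ _
      interval_cases j
      rw [QQ]; simp
  | succ k ih => obtain ⟨s, hs⟩ := ih; exact step hq0 hq1 k s hs

lemma tendsto_rpow_log_pow {p : ℝ} (hp : 0 < p) (m : ℕ) :
    Filter.Tendsto (fun x : ℝ => x ^ p * Real.log x ^ m)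
      (nhdsWithin 0 (Set.Ioi 0)) (nhds 0) := by
  rcases Nat.eq_zero_or_pos m with hm | hm
  · subst hm
    have h1 : Filter.Tendsto (fun x : ℝ => Real.exp (p * Real.log x))
        (nhdsWithin 0 (Set.Ioi 0)) (nhds 0) :=
      Real.tendsto_exp_atBot.comp
        (Real.tendsto_log_nhdsGT_zero.const_mul_atBot hp)
    refine h1.congr' ?_
    filter_upwards [self_mem_nhdsWithin] with x hx
    rw [pow_zero, mul_one, Real.rpow_def_of_pos hx, mul_comm]
  · have hm' : (m:ℝ) ≠ 0 := by positivity
    have h2 := tendsto_log_mul_rpow_nhdsGT_zero (div_pos hp (by positivity : (0:ℝ) < m))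
    have h3 := h2.pow m
    rw [zero_pow hm.ne'] at h3
    refine h3.congr' ?_
    filter_upwards [self_mem_nhdsWithin] with x hx
    rw [mul_pow, ← Real.rpow_natCast (x ^ (p / m)) m, ← Real.rpow_mul (le_of_lt hx),
      div_mul_cancel₀ _ hm']
    ring

/-- For `0 < α < 1`, the eigenfunction `f_{n+1}` extends to a continuous function on `[0,1]`
with exactly `n+1` zeroes in `[0,1]`. -/
theorem stmt_18 (α : ℝ) (hα0 : 0 < α) (hα1 : α < 1) (n : ℕ)
    (f : ℝ → ℝ)
    (hf : ∀ x : ℝ, f x = x ^ (α / (1 - α)) *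
      ((Real.log x) ^ n + ∑ k ∈ Finset.Icc 1 n,
        ((n.factorial / (n - k).factorial : ℕ) : ℝ) *
          (α ^ (k * (k - 1) / 2) * (1 - α) ^ k / ∏ i ∈ Finset.Icc 1 k, (1 - α ^ i)) *
          (Real.log x) ^ (n - k))) :
    ∃ F : ℝ → ℝ, ContinuousOn F (Set.Icc (0:ℝ) 1) ∧
      (∀ x ∈ Set.Ioc (0:ℝ) 1, F x = f x) ∧
      {x ∈ Set.Icc (0:ℝ) 1 | F x = 0}.ncard = n + 1 := by
  have hfQ : ∀ x : ℝ, f x = x ^ (α / (1 - α)) * QQ α n (Real.log x) := by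
    intro x
    have hterm : ∀ k ∈ Finset.Icc 1 n, ((n.factorial / (n - k).factorial : ℕ) : ℝ) *
          (α ^ (k * (k - 1) / 2) * (1 - α) ^ k / ∏ i ∈ Finset.Icc 1 k, (1 - α ^ i)) *
          (Real.log x) ^ (n - k) = cc α n k * Real.log x ^ (n-k) := by
      intro k _; simp only [cc]
    rw [hf x, Finset.sum_congr rfl hterm, QQ]
  set p : ℝ := α / (1 - α) with hpdef
  have hp : 0 < p := div_pos hα0 (by linarith)
  have hf0 : f 0 = 0 := by
    rw [hfQ 0, Real.zero_rpow hp.ne', zero_mul]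
  obtain ⟨s, hneg, hgap, hroot, hsign⟩ := goodRoots_exists hα0 hα1 n
  refine ⟨f, ?_, fun x _ => rfl, ?_⟩
  · -- continuity
    intro x hx
    rcases eq_or_lt_of_le hx.1 with h0 | h0
    · -- x = 0
      rw [← h0]
      have key : Filter.Tendsto f (nhdsWithin 0 (Set.Ioi 0)) (nhds 0) := by
        have hsum : Filter.Tendsto
            (fun x : ℝ => x ^ p * Real.log x ^ n +
              ∑ k ∈ Finset.Icc 1 n, cc α n k * (x ^ p * Real.log x ^ (n - k)))
            (nhdsWithin 0 (Set.Ioi 0)) (nhds 0) := by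
          have h1 := tendsto_rpow_log_pow hp n
          have h2 : Filter.Tendsto
              (fun x : ℝ => ∑ k ∈ Finset.Icc 1 n, cc α n k * (x ^ p * Real.log x ^ (n - k)))
              (nhdsWithin 0 (Set.Ioi 0)) (nhds 0) := by
            have := tendsto_finset_sum (Finset.Icc 1 n)
              (fun k _ => ((tendsto_rpow_log_pow hp (n - k)).const_mul (cc α n k)))
            simpa using this
          simpa using h1.add h2
        refine hsum.congr' ?_
        filter_upwards [self_mem_nhdsWithin] with x _
        rw [hfQ, QQ, mul_add, Finset.mul_sum]
        congr 1
        apply Finset.sum_congr rfl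
        intro k _
        ring
      have h1 : ContinuousWithinAt f (Set.Ioi (0:ℝ)) 0 := by
        rw [ContinuousWithinAt, hf0]; exact key
      have h2 : ContinuousWithinAt f (Set.Ici (0:ℝ)) 0 := by
        rw [← Set.Ioi_insert]
        exact continuousWithinAt_insert_self.mpr h1
      exact h2.mono Set.Icc_subset_Ici_self
    · -- x > 0
      apply ContinuousAt.continuousWithinAt
      have hc : ContinuousAt (fun x : ℝ => x ^ p * QQ α n (Real.log x)) x := by
        apply ContinuousAt.mul
        · exact Real.continuousAt_rpow_const x p (Or.inl h0.ne')
        · exact (QQ_cont α n).continuousAt.comp (Real.continuousAt_log h0.ne')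
      have : f = fun x : ℝ => x ^ p * QQ α n (Real.log x) := funext hfQ
      rw [this]
      exact hc
  · -- counting zeroes
    have hset : {x ∈ Set.Icc (0:ℝ) 1 | f x = 0}
        = insert (0:ℝ) ((fun j => Real.exp (s j)) '' ↑(Finset.Icc 1 n)) := by
      ext x
      simp only [Set.mem_setOf_eq, Set.mem_insert_iff, Set.mem_image, Finset.coe_Icc,
        Set.mem_Icc]
      constructor
      · rintro ⟨⟨hx0, hx1⟩, hfx⟩
        rcases eq_or_lt_of_le hx0 with h0 | h0
        · exact Or.inl h0.symm
        · right
          rw [hfQ x] at hfx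
          have hxp : 0 < x ^ (α / (1 - α)) := Real.rpow_pos_of_pos h0 _
          have hQ0 : QQ α n (Real.log x) = 0 := by
            rcases mul_eq_zero.1 hfx with h | h
            · exact absurd h hxp.ne'
            · exact h
          obtain ⟨j, h1, h2, he⟩ := (hroot _).1 hQ0
          exact ⟨j, ⟨h1, h2⟩, by rw [← he, Real.exp_log h0]⟩
      · rintro (rfl | ⟨j, ⟨h1, h2⟩, rfl⟩)
        · exact ⟨⟨le_rfl, by norm_num⟩, hf0⟩
        · have hsj := hneg j h1 h2
          have hexp1 : Real.exp (s j) < 1 := by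
            have h := Real.exp_lt_exp.mpr hsj
            rwa [Real.exp_zero] at h
          refine ⟨⟨(Real.exp_pos _).le, hexp1.le⟩, ?_⟩
          have hz : QQ α n (s j) = 0 := (hroot (s j)).mpr ⟨j, h1, h2, rfl⟩
          rw [hfQ, Real.log_exp, hz, mul_zero]
    have hfin : ((fun j => Real.exp (s j)) '' ↑(Finset.Icc 1 n)).Finite :=
      ((Finset.Icc 1 n).finite_toSet).image _
    have hnm : (0:ℝ) ∉ (fun j => Real.exp (s j)) '' ↑(Finset.Icc 1 n) := by
      rintro ⟨j, _, hj⟩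
      exact (Real.exp_pos (s j)).ne' hj
    have hmono : ∀ i j, 1 ≤ i → i < j → j ≤ n → s i < s j := by
      intro i j h1 hij hjn
      induction j with
      | zero => omega
      | succ k ih =>
        have h1k : 1 ≤ k := by omega
        have hk1 : s k < s (k+1) := by
          have hg := hgap k h1k (by omega)
          nlinarith [hneg k h1k (by omega)]
        rcases Nat.lt_succ_iff_lt_or_eq.mp hij with h | h
        · exact lt_trans (ih h (by omega)) hk1
        · rw [h]; exact hk1
    have hinj : Set.InjOn (fun j => Real.exp (s j)) ↑(Finset.Icc 1 n) := by
      intro a ha b hb hab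
      simp only [Finset.coe_Icc, Set.mem_Icc] at ha hb
      have hsab : s a = s b := Real.exp_eq_exp.mp hab
      by_contra hne
      rcases lt_or_gt_of_ne hne with h | h
      · exact absurd hsab (ne_of_lt (hmono a b ha.1 h hb.2))
      · exact absurd hsab.symm (ne_of_lt (hmono b a hb.1 h ha.2))
    rw [hset, Set.ncard_insert_of_notMem hnm hfin,
      Set.ncard_image_of_injOn hinj, Set.ncard_coe_finset, Nat.card_Icc]
    omega
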